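/- arXiv:2410.02111 — 3 statements merged into one kernel-verified Lean document; each statement's English description precedes it below -/
import Mathlib

section
/- Theorem 1 (fiberwise distance estimator sandwich bound, differentiable version). Suppose U ⊆ E × F is an open convex set containing both (x*, 0) and (x*, y*), B : E × F → E × F is differentiable on U with B(x*, 0) = 0 and ‖fderiv B z‖ ≤ C_G for every z ∈ U, and u₀ ∈ E satisfies ‖u₀‖ ≤ v₀, where C_G ≥ 0 and v₀ ≥ 0. Define the vector field v(x, y) = (u₀, A₁ y) + B(x, y) on E × F, let H be the Fréchet derivative of v at the point z* = (x*, y*), and define the fiberwise distance estimator f = ‖H (v(x*, y*))‖. Then C₋² ‖y*‖ − E(‖y*‖) ≤ f ≤ C₊² ‖y*‖ + E(‖y*‖), where E(ρ) = C_G ((2 C₊ + C_G) ρ + v₀). -/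
/-- **Theorem 1 (fiberwise distance estimator sandwich bound, differentiable version).**
`E × F` carries the product (max) norm. `A₁ : F →L[ℝ] F` satisfies
`C₋ ‖w‖ ≤ ‖A₁ w‖ ≤ C₊ ‖w‖`. `U` is an open convex set containing `(x*, 0)` and
`(x*, y*)`, `B` is differentiable on `U` with `B (x*, 0) = 0` and
`‖fderiv ℝ B z‖ ≤ C_G` on `U`, and `‖u₀‖ ≤ v₀`. With
`v (x, y) = (u₀, A₁ y) + B (x, y)`, `H = fderiv ℝ v (x*, y*)`, and
`f = ‖H (v (x*, y*))‖`, we have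
`C₋² ‖y*‖ − E(‖y*‖) ≤ f ≤ C₊² ‖y*‖ + E(‖y*‖)` where
`E ρ = C_G ((2 C₊ + C_G) ρ + v₀)`. -/
theorem fiberwise_distance_estimator_sandwich_differentiable
    {E F : Type*} [NormedAddCommGroup E] [NormedSpace ℝ E]
    [NormedAddCommGroup F] [NormedSpace ℝ F]
    (A₁ : F →L[ℝ] F) (Cminus Cplus : ℝ) (hCminus : 0 ≤ Cminus) (hCplus : 0 ≤ Cplus)
    (hA₁ : ∀ w : F, Cminus * ‖w‖ ≤ ‖A₁ w‖ ∧ ‖A₁ w‖ ≤ Cplus * ‖w‖)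
    (xs : E) (ys : F)
    (CG v₀ : ℝ) (hCG : 0 ≤ CG) (hv₀ : 0 ≤ v₀)
    (U : Set (E × F)) (hUopen : IsOpen U) (hUconv : Convex ℝ U)
    (h0U : ((xs, (0 : F)) : E × F) ∈ U) (hzU : ((xs, ys) : E × F) ∈ U)
    (B : E × F → E × F) (hBdiff : ∀ z ∈ U, DifferentiableAt ℝ B z)
    (hB0 : B (xs, (0 : F)) = 0)
    (hBderiv : ∀ z ∈ U, ‖fderiv ℝ B z‖ ≤ CG)
    (u₀ : E) (hu₀ : ‖u₀‖ ≤ v₀)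
    (v : E × F → E × F)
    (hv : v = fun p : E × F => ((u₀, A₁ p.2) : E × F) + B p)
    (H : (E × F) →L[ℝ] (E × F)) (hH : H = fderiv ℝ v (xs, ys))
    (f : ℝ) (hf : f = ‖H (v (xs, ys))‖)
    (Err : ℝ → ℝ) (hErr : Err = fun ρ => CG * ((2 * Cplus + CG) * ρ + v₀)) :
    Cminus ^ 2 * ‖ys‖ - Err ‖ys‖ ≤ f ∧ f ≤ Cplus ^ 2 * ‖ys‖ + Err ‖ys‖ := by
  subst hv hH hf hErr
  beta_reduce
  set zs : E × F := (xs, ys) with hzs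
  set M : (E × F) →L[ℝ] (E × F) :=
    (0 : (E × F) →L[ℝ] E).prod (A₁.comp (ContinuousLinearMap.snd ℝ E F)) with hM
  have hMapp : ∀ p : E × F, M p = ((0 : E), A₁ p.2) := by intro p; simp [hM]
  set D : (E × F) →L[ℝ] (E × F) := fderiv ℝ B zs with hD
  have hBz : HasFDerivAt B D zs := (hBdiff zs hzU).hasFDerivAt
  have hgderiv : HasFDerivAt (fun q : E × F => ((u₀, A₁ q.2) : E × F)) M zs := by
    have heq : (fun q : E × F => ((u₀, A₁ q.2) : E × F))
        = fun q : E × F => ((u₀, (0 : F)) : E × F) + M q := by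
      funext q; simp [hMapp, Prod.ext_iff]
    rw [heq]
    have := (hasFDerivAt_const ((u₀, (0 : F)) : E × F) zs).add M.hasFDerivAt
    rw [zero_add] at this; exact this
  have hHeq : fderiv ℝ (fun p : E × F => ((u₀, A₁ p.2) : E × F) + B p) zs = M + D :=
    (hgderiv.add hBz).fderiv
  have hDnorm : ‖D‖ ≤ CG := hBderiv zs hzU
  -- mean value bound on B
  have hmvt := hUconv.norm_image_sub_le_of_norm_fderiv_le hBdiff hBderiv h0U hzU
  have hdist : ‖zs - ((xs, (0 : F)) : E × F)‖ = ‖ys‖ := by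
    simp [hzs, Prod.norm_def, norm_nonneg]
  have hBbound : ‖B zs‖ ≤ CG * ‖ys‖ := by
    rw [hB0, sub_zero] at hmvt; rw [hdist] at hmvt; exact hmvt
  set w : E × F := ((u₀, A₁ ys) : E × F) + B zs with hw
  have hw2 : w.2 = A₁ ys + (B zs).2 := rfl
  have hB2 : ‖(B zs).2‖ ≤ CG * ‖ys‖ := le_trans (norm_snd_le _) hBbound
  have hA1ys_lo : Cminus * ‖ys‖ ≤ ‖A₁ ys‖ := (hA₁ ys).1
  have hA1ys_hi : ‖A₁ ys‖ ≤ Cplus * ‖ys‖ := (hA₁ ys).2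
  have hw2hi : ‖w.2‖ ≤ Cplus * ‖ys‖ + CG * ‖ys‖ := by
    rw [hw2]
    exact le_trans (norm_add_le _ _) (add_le_add hA1ys_hi hB2)
  have hw2lo : Cminus * ‖ys‖ - CG * ‖ys‖ ≤ ‖w.2‖ := by
    rw [hw2]
    have := norm_add_le (A₁ ys + (B zs).2) (-((B zs).2))
    simp only [add_neg_cancel_right, norm_neg] at this
    linarith
  have hwnorm : ‖w‖ ≤ Cplus * ‖ys‖ + v₀ + CG * ‖ys‖ := by
    have h1 : ‖((u₀, A₁ ys) : E × F)‖ ≤ Cplus * ‖ys‖ + v₀ := by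
      rw [Prod.norm_def]
      exact max_le (by linarith [mul_nonneg hCplus (norm_nonneg ys)]) (by linarith)
    calc ‖w‖ ≤ ‖((u₀, A₁ ys) : E × F)‖ + ‖B zs‖ := norm_add_le _ _
      _ ≤ Cplus * ‖ys‖ + v₀ + CG * ‖ys‖ := add_le_add h1 hBbound
  have hDw : ‖D w‖ ≤ CG * (Cplus * ‖ys‖ + v₀ + CG * ‖ys‖) :=
    le_trans (D.le_opNorm w) (mul_le_mul hDnorm hwnorm (norm_nonneg _) hCG)
  have hHw : (M + D) w = ((0 : E), A₁ w.2) + D w := by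
    simp [ContinuousLinearMap.add_apply, hMapp]
  have hCC : Cminus * ‖ys‖ ≤ Cplus * ‖ys‖ := le_trans hA1ys_lo hA1ys_hi
  constructor
  · -- lower bound
    have h2 : ‖((M + D) w).2‖ ≤ ‖(M + D) w‖ := norm_snd_le _
    have h2eq : ((M + D) w).2 = A₁ w.2 + (D w).2 := by rw [hHw]; rfl
    have h3 : ‖A₁ w.2‖ - ‖(D w).2‖ ≤ ‖((M + D) w).2‖ := by
      rw [h2eq]
      have := norm_add_le (A₁ w.2 + (D w).2) (-((D w).2))
      simp only [add_neg_cancel_right, norm_neg] at this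
      linarith
    have h4 : ‖(D w).2‖ ≤ CG * (Cplus * ‖ys‖ + v₀ + CG * ‖ys‖) :=
      le_trans (norm_snd_le _) hDw
    have h5 : Cminus * ‖w.2‖ ≤ ‖A₁ w.2‖ := (hA₁ w.2).1
    have h6 : Cminus * (Cminus * ‖ys‖ - CG * ‖ys‖) ≤ Cminus * ‖w.2‖ :=
      mul_le_mul_of_nonneg_left hw2lo hCminus
    rw [hHeq]
    nlinarith [mul_le_mul_of_nonneg_left hCC hCG]
  · -- upper bound
    have h1 : ‖(M + D) w‖ ≤ ‖A₁ w.2‖ + ‖D w‖ := by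
      rw [hHw]
      refine le_trans (norm_add_le _ _) (add_le_add ?_ le_rfl)
      rw [Prod.norm_def]
      simp [norm_nonneg]
    have h5 : ‖A₁ w.2‖ ≤ Cplus * ‖w.2‖ := (hA₁ w.2).2
    have h6 : Cplus * ‖w.2‖ ≤ Cplus * (Cplus * ‖ys‖ + CG * ‖ys‖) :=
      mul_le_mul_of_nonneg_left hw2hi hCplus
    rw [hHeq]
    linarith
end

section
/- Phase entrainment of the coupled Hopf phase oscillators. Let ω ∈ ℝ and γ_θ > 0, and let θ₁, θ₂ : ℝ → ℝ be differentiable functions satisfying θ₁'(t) = ω + γ_θ · sin(θ₁(t) − θ₂(t)) and θ₂'(t) = ω + γ_θ · sin(θ₂(t) − θ₁(t)) for all t ≥ 0. If the initial phase difference satisfies 0 < θ₁(0) − θ₂(0) < 2π, then the phase difference θ₁(t) − θ₂(t) converges to π as t → ∞; in particular the two oscillators phase-lock, so the coupled phase system entrains whenever γ_θ > 0. -/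
open Real Filter

/-- **Phase entrainment of the coupled Hopf phase oscillators.** If `γ_θ > 0` and
the phases satisfy `θᵢ' = ω + γ_θ sin (θᵢ − θⱼ)` for `t ≥ 0`, with initial phase
difference `0 < θ₁ 0 − θ₂ 0 < 2π`, then `θ₁ t − θ₂ t → π` as `t → ∞`. -/
theorem hopf_phase_entrainment
    (ω γθ : ℝ) (hγθ : 0 < γθ)
    (θ₁ θ₂ : ℝ → ℝ) (hθ₁ : Differentiable ℝ θ₁) (hθ₂ : Differentiable ℝ θ₂)
    (hode₁ : ∀ t : ℝ, 0 ≤ t → deriv θ₁ t = ω + γθ * Real.sin (θ₁ t - θ₂ t))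
    (hode₂ : ∀ t : ℝ, 0 ≤ t → deriv θ₂ t = ω + γθ * Real.sin (θ₂ t - θ₁ t))
    (hinit : 0 < θ₁ 0 - θ₂ 0 ∧ θ₁ 0 - θ₂ 0 < 2 * π) :
    Tendsto (fun t => θ₁ t - θ₂ t) atTop (nhds π) := by
  obtain ⟨h0, h2⟩ := hinit
  set φ : ℝ → ℝ := fun t => θ₁ t - θ₂ t with hφdef
  replace h0 : 0 < φ 0 := h0
  replace h2 : φ 0 < 2 * π := h2
  have hφdiff : Differentiable ℝ φ := hθ₁.sub hθ₂
  have hφcont : Continuous φ := hφdiff.continuous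
  -- the phase difference ODE
  have hφ' : ∀ t : ℝ, 0 ≤ t → HasDerivAt φ (2 * γθ * Real.sin (φ t)) t := by
    intro t ht
    have h := (hθ₁ t).hasDerivAt.sub (hθ₂ t).hasDerivAt
    rw [hode₁ t ht, hode₂ t ht] at h
    have hs : Real.sin (θ₂ t - θ₁ t) = - Real.sin (θ₁ t - θ₂ t) := by
      rw [← Real.sin_neg]; ring_nf
    rw [hs] at h
    convert h using 1
    · rfl
    · rfl
    · rfl
    simp only [hφdef]
    ring
  set ψ : ℝ → ℝ := fun t => Real.cos (φ t) with hψdef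
  have hψcont : Continuous ψ := Real.continuous_cos.comp hφcont
  have hψdiff : Differentiable ℝ ψ := Real.differentiable_cos.comp hφdiff
  have hψ' : ∀ t : ℝ, 0 ≤ t → HasDerivAt ψ (-(2 * γθ) * (Real.sin (φ t)) ^ 2) t := by
    intro t ht
    have h := (Real.hasDerivAt_cos (φ t)).comp t (hφ' t ht)
    convert h using 1
    · rfl
    · rfl
    · rfl
    ring
  have hneg1 : ∀ t : ℝ, -1 ≤ ψ t := fun t => Real.neg_one_le_cos (φ t)
  -- ψ is antitone on [0, ∞)
  have hanti : AntitoneOn ψ (Set.Ici 0) := by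
    apply antitoneOn_of_deriv_nonpos (convex_Ici 0) hψcont.continuousOn
      (hψdiff.differentiableOn)
    intro x hx
    rw [interior_Ici] at hx
    rw [(hψ' x hx.le).deriv]
    nlinarith [sq_nonneg (Real.sin (φ x))]
  -- ψ 0 < 1 since 0 < φ 0 < 2π
  have hψ0 : ψ 0 < 1 := by
    rcases lt_or_eq_of_le (Real.cos_le_one (φ 0)) with h | h
    · exact h
    · exfalso
      have h2pi : (0:ℝ) < 2 * π := by positivity
      have := (Real.cos_eq_one_iff_of_lt_of_lt (x := φ 0) (by linarith) h2).mp h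
      linarith
  -- ψ t ≤ ψ 0 for t ≥ 0
  have hψle : ∀ t : ℝ, 0 ≤ t → ψ t ≤ ψ 0 :=
    fun t ht => hanti (Set.self_mem_Ici) ht ht
  -- invariance: φ t ∈ (0, 2π) for t ≥ 0
  have hinv : ∀ t : ℝ, 0 ≤ t → 0 < φ t ∧ φ t < 2 * π := by
    intro t ht
    constructor
    · by_contra hc
      push_neg at hc
      have h0t : (0:ℝ) ∈ Set.Icc (φ t) (φ 0) := ⟨hc, h0.le⟩
      have := intermediate_value_Icc' ht hφcont.continuousOn h0t
      obtain ⟨s, hs, hφs⟩ := this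
      have : ψ s = 1 := by simp [hψdef, hφs]
      have := hψle s hs.1
      linarith
    · by_contra hc
      push_neg at hc
      have h2t : (2 * π : ℝ) ∈ Set.Icc (φ 0) (φ t) := ⟨h2.le, hc⟩
      have := intermediate_value_Icc ht hφcont.continuousOn h2t
      obtain ⟨s, hs, hφs⟩ := this
      have : ψ s = 1 := by simp [hψdef, hφs, Real.cos_two_pi]
      have := hψle s hs.1
      linarith
  -- ψ converges to its infimum
  set Ψ : ℝ → ℝ := fun t => ψ (max t 0) with hΨdef
  have hΨanti : Antitone Ψ := by
    intro a b hab
    exact hanti (le_max_right a 0) (le_max_right b 0) (max_le_max hab le_rfl)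
  have hΨbdd : BddBelow (Set.range Ψ) := by
    refine ⟨-1, ?_⟩
    rintro x ⟨t, rfl⟩
    exact hneg1 _
  set L : ℝ := ⨅ t, Ψ t with hLdef
  have hΨtend : Tendsto Ψ atTop (nhds L) := tendsto_atTop_ciInf hΨanti hΨbdd
  have hEq : Ψ =ᶠ[atTop] ψ := by
    filter_upwards [eventually_ge_atTop (0:ℝ)] with t ht
    simp [hΨdef, max_eq_left ht]
  have hψtend : Tendsto ψ atTop (nhds L) := hΨtend.congr' hEq
  have hLle : ∀ t : ℝ, L ≤ Ψ t := fun t => ciInf_le hΨbdd t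
  have hLneg1 : -1 ≤ L := le_ciInf fun t => hneg1 _
  -- L = -1
  have hL : L = -1 := by
    by_contra hc
    have hLgt : -1 < L := lt_of_le_of_ne hLneg1 (Ne.symm hc)
    set δ : ℝ := (1 - ψ 0) * (1 + L) with hδdef
    have hδpos : 0 < δ := by
      apply mul_pos <;> linarith
    -- 1 - ψ t ^ 2 ≥ δ for t ≥ 0
    have hbound : ∀ t : ℝ, 0 ≤ t → δ ≤ (Real.sin (φ t)) ^ 2 := by
      intro t ht
      have h1 : ψ t ≤ ψ 0 := hψle t ht
      have h2 : L ≤ ψ t := by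
        have := hLle t
        simpa [hΨdef, max_eq_left ht] using this
      have hsq : (Real.sin (φ t)) ^ 2 = (1 - ψ t) * (1 + ψ t) := by
        have := Real.sin_sq_add_cos_sq (φ t)
        simp only [hψdef]
        nlinarith [this]
      rw [hsq]
      have ha : 1 - ψ 0 ≤ 1 - ψ t := by linarith
      have hb : 1 + L ≤ 1 + ψ t := by linarith
      have : (0:ℝ) ≤ 1 - ψ 0 := by linarith
      nlinarith
    -- g t = ψ t + 2 γθ δ t is antitone on [0, ∞)
    set g : ℝ → ℝ := fun t => ψ t + 2 * γθ * δ * t with hgdef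
    have hganti : AntitoneOn g (Set.Ici 0) := by
      apply antitoneOn_of_deriv_nonpos (convex_Ici 0)
        (hψcont.add (by continuity)).continuousOn
        ((hψdiff.add (by fun_prop)).differentiableOn)
      intro x hx
      rw [interior_Ici] at hx
      have hgd : HasDerivAt g (-(2 * γθ) * (Real.sin (φ x)) ^ 2 + 2 * γθ * δ) x := by
        have h1 : HasDerivAt (fun t : ℝ => 2 * γθ * δ * t) (2 * γθ * δ) x := by
          simpa using (hasDerivAt_id x).const_mul (2 * γθ * δ)
        exact (hψ' x hx.le).add h1
      rw [show deriv (ψ + HMul.hMul (2 * γθ * δ)) x = deriv g x from rfl, hgd.deriv]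
      have := hbound x hx.le
      nlinarith
    -- derive contradiction at large T
    set T : ℝ := (ψ 0 + 2) / (2 * γθ * δ) with hTdef
    have hTpos : 0 < T := by
      apply div_pos (by linarith [hneg1 0]) (by positivity)
    have := hganti Set.self_mem_Ici (Set.mem_Ici.mpr hTpos.le) hTpos.le
    simp only [hgdef] at this
    have hTeq : 2 * γθ * δ * T = ψ 0 + 2 := by
      rw [hTdef]
      field_simp
    have := hneg1 T
    nlinarith
  rw [hL] at hψtend
  -- conclude φ → π via arccos
  have habs : ∀ t : ℝ, 0 ≤ t → |φ t - π| = Real.arccos (-ψ t) := by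
    intro t ht
    obtain ⟨hp1, hp2⟩ := hinv t ht
    have hπ : 0 < π := Real.pi_pos
    have h1 : |φ t - π| ≤ π := abs_le.mpr ⟨by linarith, by linarith⟩
    have h2 : Real.cos (|φ t - π|) = -ψ t := by
      rw [Real.cos_abs]
      simp only [hψdef]
      rw [show φ t - π = -(π - φ t) by ring, Real.cos_neg, Real.cos_pi_sub]
    rw [← h2, Real.arccos_cos (abs_nonneg _) h1]
  have harc : Tendsto (fun t => Real.arccos (-ψ t)) atTop (nhds 0) := by
    have h1 : Tendsto (fun t => -ψ t) atTop (nhds 1) := by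
      have := hψtend.neg
      simpa using this
    have := (Real.continuous_arccos.tendsto 1).comp h1
    simpa [Real.arccos_one, Function.comp_def] using this
  have habstend : Tendsto (fun t => |φ t - π|) atTop (nhds 0) := by
    apply harc.congr'
    filter_upwards [eventually_ge_atTop (0:ℝ)] with t ht
    exact (habs t ht).symm
  have hsub : Tendsto (fun t => φ t - π) atTop (nhds 0) := by
    rw [tendsto_zero_iff_abs_tendsto_zero]
    exact habstend
  have := hsub.add_const π
  simpa using this
end

section
/- Global asymptotic stability of the linear anchoring dynamics for a Hurwitz matrix. Let n be a finite index type and let A be an n × n matrix over ℂ such that every eigenvalue μ in the spectrum of A satisfies Re(μ) < 0 (A is Hurwitz). Then for every vector y ∈ ℂⁿ, the solution t ↦ exp(t • A) • y of the linear system y' = A y tends to 0 as the real time t → ∞. -/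
set_option maxHeartbeats 1000000

open Filter

open NormedSpace

attribute [local instance] Matrix.linftyOpNormedRing Matrix.linftyOpNormedAlgebra

lemma exp_mulVec_tsum {n : Type*} [Fintype n] [DecidableEq n]
    (B : Matrix n n ℂ) (y : n → ℂ) :
    (exp B).mulVec y = ∑' k : ℕ, ((Nat.factorial k : ℂ))⁻¹ • ((B ^ k).mulVec y) := by
  have h := exp_series_hasSum_exp' (𝕂 := ℂ) B
  have hcont : Continuous fun M : Matrix n n ℂ => M.mulVec y :=
    Continuous.matrix_mulVec continuous_id continuous_const
  let L : Matrix n n ℂ →+ (n → ℂ) :=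
    { toFun := fun M => M.mulVec y
      map_zero' := Matrix.zero_mulVec y
      map_add' := fun M N => Matrix.add_mulVec M N y }
  have h2 := h.map L hcont
  have h3 : HasSum (fun k : ℕ => ((Nat.factorial k : ℂ))⁻¹ • ((B ^ k).mulVec y))
      ((exp B).mulVec y) := by
    refine h2.congr_fun fun k => ?_
    simp [L, Matrix.smul_mulVec]
  exact h3.tsum_eq.symm

lemma hurwitz_key {n : Type*} [Fintype n] [DecidableEq n]
    (A : Matrix n n ℂ) (μ : ℂ) (hμ : μ.re < 0) (y : n → ℂ) (k : ℕ)
    (h : ((A - μ • 1) ^ k).mulVec y = 0) :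
    Tendsto (fun t : ℝ => (exp ((t : ℂ) • A)).mulVec y) atTop (nhds 0) := by
  set B := A - μ • (1 : Matrix n n ℂ) with hB
  have hsplit : ∀ t : ℝ, (exp ((t : ℂ) • A)).mulVec y
      = ∑ j ∈ Finset.range k,
          (Complex.exp ((t : ℂ) * μ) * ((t : ℂ) ^ j * ((Nat.factorial j : ℂ))⁻¹)) • ((B ^ j).mulVec y) := by
    intro t
    have hA : (t : ℂ) • A = ((t : ℂ) * μ) • (1 : Matrix n n ℂ) + (t : ℂ) • B := by
      rw [hB, smul_sub, smul_smul]
      abel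
    have hcomm : Commute (((t : ℂ) * μ) • (1 : Matrix n n ℂ)) ((t : ℂ) • B) := by
      rw [← Algebra.algebraMap_eq_smul_one]
      exact (Algebra.commutes _ _)
    rw [hA, Matrix.exp_add_of_commute _ _ hcomm]
    have h1 : exp (((t : ℂ) * μ) • (1 : Matrix n n ℂ)) = Complex.exp ((t : ℂ) * μ) • 1 := by
      rw [Matrix.smul_one_eq_diagonal, Matrix.exp_diagonal, Pi.exp_def,
        Complex.exp_eq_exp_ℂ, ← Matrix.smul_one_eq_diagonal]
    rw [h1, Matrix.smul_mul, Matrix.one_mul, Matrix.smul_mulVec, exp_mulVec_tsum]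
    have hzero : ∀ j ∉ Finset.range k, ((Nat.factorial j : ℂ))⁻¹ • ((((t : ℂ) • B) ^ j).mulVec y) = 0 := by
      intro j hj
      rw [Finset.mem_range, not_lt] at hj
      have : B ^ j = B ^ (j - k) * B ^ k := by rw [← pow_add]; congr 1; omega
      rw [smul_pow, Matrix.smul_mulVec, this, ← Matrix.mulVec_mulVec, h,
        Matrix.mulVec_zero, smul_zero, smul_zero]
    rw [tsum_eq_sum hzero, Finset.smul_sum]
    refine Finset.sum_congr rfl fun j hj => ?_
    rw [smul_pow, Matrix.smul_mulVec, smul_smul, smul_smul]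
    ring_nf
  simp only [hsplit]
  have : (0 : n → ℂ) = ∑ j ∈ Finset.range k, (0 : n → ℂ) := by simp
  rw [this]
  refine tendsto_finset_sum _ fun j _ => ?_
  have hc : Tendsto (fun t : ℝ =>
      Complex.exp ((t : ℂ) * μ) * ((t : ℂ) ^ j * ((Nat.factorial j : ℂ))⁻¹)) atTop (nhds 0) := by
    have hb : (0 : ℝ) < -μ.re := by linarith
    have h2 : Tendsto (fun t : ℝ => (-μ.re * t) ^ j * Real.exp (-(-μ.re * t)))
        atTop (nhds 0) :=
      (Real.tendsto_pow_mul_exp_neg_atTop_nhds_zero j).comp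
        (Tendsto.const_mul_atTop hb tendsto_id)
    have h3 : Tendsto (fun t : ℝ => ((-μ.re) ^ j)⁻¹ *
        ((-μ.re * t) ^ j * Real.exp (-(-μ.re * t)))) atTop (nhds 0) := by
      simpa using h2.const_mul ((-μ.re) ^ j)⁻¹
    have h4 : Tendsto (fun t : ℝ => t ^ j * Real.exp (μ.re * t)) atTop (nhds 0) := by
      refine h3.congr fun t => ?_
      rw [mul_pow]
      have hne : ((-μ.re) ^ j) ≠ 0 := pow_ne_zero _ (by linarith)
      field_simp
    rw [tendsto_zero_iff_norm_tendsto_zero]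
    have h5 : Tendsto (fun t : ℝ => t ^ j * Real.exp (μ.re * t) * ((Nat.factorial j : ℝ))⁻¹)
        atTop (nhds 0) := by simpa using h4.mul_const ((Nat.factorial j : ℝ))⁻¹
    refine squeeze_zero_norm' ?_ h5
    filter_upwards [eventually_ge_atTop (0 : ℝ)] with t ht
    rw [norm_norm, norm_mul, norm_mul]
    have e1 : ‖Complex.exp ((t : ℂ) * μ)‖ = Real.exp (μ.re * t) := by
      rw [Complex.norm_exp]
      congr 1
      simp [Complex.mul_re, mul_comm]
    have e2 : ‖((t : ℂ)) ^ j‖ = t ^ j := by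
      rw [norm_pow]
      simp [Complex.norm_real, abs_of_nonneg ht]
    have e3 : ‖((Nat.factorial j : ℂ))⁻¹‖ = ((Nat.factorial j : ℝ))⁻¹ := by
      rw [norm_inv]
      simp
    rw [e1, e2, e3]
    exact le_of_eq (by ring)
  simpa using hc.smul_const ((B ^ j).mulVec y)

/-- **Global asymptotic stability of the linear anchoring dynamics for a Hurwitz
matrix.** If every eigenvalue `μ ∈ spectrum ℂ A` satisfies `Re μ < 0`, then for
every `y : n → ℂ` the solution `t ↦ exp (t • A) *ᵥ y` of `y' = A y` tends to `0`
as `t → ∞`. -/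
theorem hurwitz_matrix_exp_tendsto_zero
    {n : Type*} [Fintype n] [DecidableEq n]
    (A : Matrix n n ℂ) (hA : ∀ μ ∈ spectrum ℂ A, μ.re < 0) (y : n → ℂ) :
    Tendsto (fun t : ℝ => (NormedSpace.exp ((t : ℂ) • A)).mulVec y) atTop
      (nhds 0) := by
  have hy : y ∈ ⨆ μ : ℂ, Module.End.maxGenEigenspace (Matrix.toLinAlgEquiv' A) μ := by
    rw [Module.End.iSup_maxGenEigenspace_eq_top]; trivial
  refine Submodule.iSup_induction (motive := fun v =>
      Tendsto (fun t : ℝ => (NormedSpace.exp ((t : ℂ) • A)).mulVec v) atTop (nhds 0))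
      _ hy ?_ ?_ ?_
  · intro μ v hv
    by_cases hv0 : v = 0
    · simpa [hv0] using tendsto_const_nhds
    obtain ⟨k, hk⟩ := (Module.End.mem_maxGenEigenspace _ _ _).mp hv
    have e1 : ((Matrix.toLinAlgEquiv' A - μ • 1) ^ k) v = ((A - μ • 1) ^ k).mulVec v := by
      have : Matrix.toLinAlgEquiv' A - μ • 1
          = Matrix.toLinAlgEquiv' (A - μ • (1 : Matrix n n ℂ)) := by
        rw [map_sub, map_smul, map_one]
      rw [this, ← map_pow, Matrix.toLinAlgEquiv'_apply]
    rw [e1] at hk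
    have hkpos : k ≠ 0 := by
      rintro rfl
      simp only [pow_zero, Matrix.one_mulVec] at hk
      exact hv0 hk
    have hev : Module.End.HasEigenvalue (Matrix.toLinAlgEquiv' A) μ := by
      refine Module.End.hasEigenvalue_of_hasGenEigenvalue (k := k) ?_
      rw [Module.End.HasGenEigenvalue, Module.End.HasUnifEigenvalue]
      rw [Submodule.ne_bot_iff]
      refine ⟨v, ?_, hv0⟩
      rw [Module.End.mem_genEigenspace]
      exact ⟨k, le_refl _, by rw [LinearMap.mem_ker, e1]; exact hk⟩
    have hspec : μ ∈ spectrum ℂ A := by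
      have := AlgEquiv.spectrum_eq (Matrix.toLinAlgEquiv' (n := n) (R := ℂ)) A
      rw [← this]
      exact hev.mem_spectrum
    exact hurwitz_key A μ (hA μ hspec) v k hk
  · simpa using tendsto_const_nhds
  · intro a b ha hb
    simpa [Matrix.mulVec_add] using ha.add hb
end
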